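/- For any s, s* ∈ ℝⁿ with w = s - s*, the function M(s) = f0 + gᵀs + (1/2)sᵀHs + (β/6)‖s‖³ + (σ/4)‖s‖⁴ satisfies the expansion M(s) - M(s*) = (B(s*)s* + g)ᵀw + (1/2)wᵀB(s*)w + F₂, where B(s*) = H + (β/2)‖s*‖ I + σ‖s*‖² I and F₂ = (1/2)(‖s‖ - ‖s*‖)² [ (β/6)(‖s*‖ + 2‖s‖) + (σ/2)(‖s*‖ + ‖s‖)² ]. -/

import Mathlib

open Matrix Polynomial

noncomputable def enorm' {n : ℕ} (s : Fin n → ℝ) : ℝ := Real.sqrt (s ⬝ᵥ s)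

noncomputable def Mfun {n : ℕ} (f0 : ℝ) (g : Fin n → ℝ)
    (H : Matrix (Fin n) (Fin n) ℝ) (β σ : ℝ) (s : Fin n → ℝ) : ℝ :=
  f0 + g ⬝ᵥ s + (1/2) * (s ⬝ᵥ (H *ᵥ s)) + (β/6) * enorm' s ^ 3 + (σ/4) * enorm' s ^ 4

noncomputable def Bmat {n : ℕ} (H : Matrix (Fin n) (Fin n) ℝ) (β σ : ℝ)
    (s : Fin n → ℝ) : Matrix (Fin n) (Fin n) ℝ :=
  H + ((β/2) * enorm' s) • (1 : Matrix (Fin n) (Fin n) ℝ)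
    + (σ * enorm' s ^ 2) • (1 : Matrix (Fin n) (Fin n) ℝ)

lemma enorm_sq {n : ℕ} (s : Fin n → ℝ) : (enorm' s) ^ 2 = s ⬝ᵥ s := by
  have h : (0:ℝ) ≤ s ⬝ᵥ s := Finset.sum_nonneg fun i _ => mul_self_nonneg _
  simpa [enorm'] using Real.sq_sqrt h

theorem stmt3 {n : ℕ} (f0 : ℝ) (g : Fin n → ℝ) (H : Matrix (Fin n) (Fin n) ℝ)
    (hH : H.IsSymm) (β σ : ℝ) (s sstar : Fin n → ℝ) :
    Mfun f0 g H β σ s - Mfun f0 g H β σ sstar =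
      ((Bmat H β σ sstar) *ᵥ sstar + g) ⬝ᵥ (s - sstar)
        + (1/2) * ((s - sstar) ⬝ᵥ ((Bmat H β σ sstar) *ᵥ (s - sstar)))
        + (1/2) * (enorm' s - enorm' sstar)^2 *
            ((β/6) * (enorm' sstar + 2 * enorm' s)
              + (σ/2) * (enorm' sstar + enorm' s)^2) := by
  have hsymm : sstar ⬝ᵥ (H *ᵥ s) = s ⬝ᵥ (H *ᵥ sstar) := by
    rw [Matrix.dotProduct_mulVec, ← Matrix.mulVec_transpose, hH.eq,
      dotProduct_comm, Matrix.dotProduct_mulVec, ← Matrix.mulVec_transpose, hH.eq]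
  have ha := enorm_sq s
  have hb := enorm_sq sstar
  have hc : (H *ᵥ sstar) ⬝ᵥ s = s ⬝ᵥ (H *ᵥ sstar) := dotProduct_comm _ _
  have hd : (H *ᵥ sstar) ⬝ᵥ sstar = sstar ⬝ᵥ (H *ᵥ sstar) := dotProduct_comm _ _
  have hab : s ⬝ᵥ sstar = sstar ⬝ᵥ s := dotProduct_comm _ _
  simp only [Mfun, Bmat, Matrix.add_mulVec, Matrix.smul_mulVec, Matrix.one_mulVec,
    Matrix.mulVec_sub, sub_dotProduct, dotProduct_sub, add_dotProduct,
    dotProduct_add, dotProduct_smul, smul_dotProduct, smul_eq_mul]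
  rw [← ha, ← hb] at *
  linear_combination (1/2) * hsymm + (β/4 * enorm' sstar + σ/2 * enorm' sstar ^2) * hab - hc + hd
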